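/- Let a₁, a₂, …, a_N be nonnegative real numbers, let a* = max_i aᵢ, let 1 ≤ t ≤ N, and assume Σ_{i=1}^N aᵢ ≥ t·a*. Then the elementary symmetric sum satisfies Σ_{S ⊆ [N], |S| = t} Π_{i∈S} aᵢ ≥ (1/t!)·(Σ_{i=1}^N aᵢ − t·a*)^t. -/
import Mathlib

open Finset

lemma esymm_rec (a : ℕ → ℝ) (t : ℕ) (B : Finset ℕ) :
    ∑ i ∈ B, a i * ∑ S ∈ Finset.powersetCard t (B.erase i), ∏ j ∈ S, a j
      = ((t : ℝ) + 1) * ∑ S ∈ Finset.powersetCard (t + 1) B, ∏ j ∈ S, a j := by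
  have hRHS : ((t : ℝ) + 1) * ∑ S ∈ Finset.powersetCard (t + 1) B, ∏ j ∈ S, a j
      = ∑ S ∈ Finset.powersetCard (t + 1) B, ∑ i ∈ S, ∏ j ∈ S, a j := by
    rw [Finset.mul_sum]
    refine Finset.sum_congr rfl fun S hS => ?_
    rw [Finset.sum_const, (Finset.mem_powersetCard.1 hS).2]
    push_cast; ring
  rw [hRHS]
  simp_rw [Finset.mul_sum]
  rw [Finset.sum_sigma', Finset.sum_sigma']
  refine Finset.sum_nbij' (fun p => ⟨insert p.1 p.2, p.1⟩)
    (fun q => ⟨q.2, q.1.erase q.2⟩) ?_ ?_ ?_ ?_ ?_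
  · rintro ⟨i, S⟩ hp
    simp only [Finset.mem_sigma, Finset.mem_powersetCard] at hp ⊢
    obtain ⟨hi, hSsub, hScard⟩ := hp
    have hiS : i ∉ S := fun h => (Finset.mem_erase.1 (hSsub h)).1 rfl
    refine ⟨⟨?_, ?_⟩, Finset.mem_insert_self _ _⟩
    · exact Finset.insert_subset hi (hSsub.trans (Finset.erase_subset _ _))
    · rw [Finset.card_insert_of_notMem hiS, hScard]
  · rintro ⟨S, i⟩ hq
    simp only [Finset.mem_sigma, Finset.mem_powersetCard] at hq ⊢
    obtain ⟨⟨hSsub, hScard⟩, hiS⟩ := hq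
    refine ⟨hSsub hiS, ?_, ?_⟩
    · exact fun j hj => Finset.mem_erase.2 ⟨(Finset.mem_erase.1 hj).1,
        hSsub (Finset.mem_of_mem_erase hj)⟩
    · rw [Finset.card_erase_of_mem hiS, hScard]; omega
  · rintro ⟨i, S⟩ hp
    simp only [Finset.mem_sigma, Finset.mem_powersetCard] at hp
    obtain ⟨hi, hSsub, hScard⟩ := hp
    have hiS : i ∉ S := fun h => (Finset.mem_erase.1 (hSsub h)).1 rfl
    simp [Finset.erase_insert hiS]
  · rintro ⟨S, i⟩ hq
    simp only [Finset.mem_sigma, Finset.mem_powersetCard] at hq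
    simp [Finset.insert_erase hq.2]
  · rintro ⟨i, S⟩ hp
    simp only [Finset.mem_sigma, Finset.mem_powersetCard] at hp
    obtain ⟨hi, hSsub, hScard⟩ := hp
    have hiS : i ∉ S := fun h => (Finset.mem_erase.1 (hSsub h)).1 rfl
    simp [Finset.prod_insert hiS]

lemma esymm_aux (a : ℕ → ℝ) (M : ℝ) (hM0 : 0 ≤ M) :
    ∀ (t : ℕ) (B : Finset ℕ), (∀ i ∈ B, 0 ≤ a i) → (∀ i ∈ B, a i ≤ M) →
      t ≤ B.card → 0 ≤ (∑ i ∈ B, a i) - t * M →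
      (1 / (Nat.factorial t) : ℝ) * ((∑ i ∈ B, a i) - t * M) ^ t
        ≤ ∑ S ∈ Finset.powersetCard t B, ∏ i ∈ S, a i := by
  intro t
  induction t with
  | zero => intro B _ _ _ _; simp
  | succ t ih =>
    intro B ha hle hcard hX
    set X : ℝ := (∑ i ∈ B, a i) - (t + 1 : ℕ) * M with hXdef
    have hstep : ∀ i ∈ B, a i * ((1 / (Nat.factorial t) : ℝ) * X ^ t)
        ≤ a i * ∑ S ∈ Finset.powersetCard t (B.erase i), ∏ j ∈ S, a j := by
      intro i hi
      refine mul_le_mul_of_nonneg_left ?_ (ha i hi)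
      have h1 : X ≤ (∑ j ∈ B.erase i, a j) - t * M := by
        rw [Finset.sum_erase_eq_sub hi, hXdef]
        push_cast
        have := hle i hi
        linarith
      have h2 : 0 ≤ (∑ j ∈ B.erase i, a j) - t * M := le_trans hX h1
      calc (1 / (Nat.factorial t) : ℝ) * X ^ t
          ≤ (1 / (Nat.factorial t) : ℝ) * ((∑ j ∈ B.erase i, a j) - t * M) ^ t := by
            refine mul_le_mul_of_nonneg_left (pow_le_pow_left₀ hX h1 t) ?_
            positivity
        _ ≤ ∑ S ∈ Finset.powersetCard t (B.erase i), ∏ j ∈ S, a j := by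
            refine ih (B.erase i) (fun j hj => ha j (Finset.mem_of_mem_erase hj))
              (fun j hj => hle j (Finset.mem_of_mem_erase hj)) ?_ h2
            rw [Finset.card_erase_of_mem hi]; omega
    have hsum := Finset.sum_le_sum hstep
    rw [esymm_rec a t B, ← Finset.sum_mul] at hsum
    have hXle : X ≤ ∑ i ∈ B, a i := by
      rw [hXdef]; nlinarith [mul_nonneg (Nat.cast_nonneg (t+1) : (0:ℝ) ≤ (t+1:ℕ)) hM0]
    have hXpow : (0 : ℝ) ≤ (1 / (Nat.factorial t) : ℝ) * X ^ t := by positivity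
    have h3 : X * ((1 / (Nat.factorial t) : ℝ) * X ^ t)
        ≤ ((t : ℝ) + 1) * ∑ S ∈ Finset.powersetCard (t + 1) B, ∏ j ∈ S, a j :=
      le_trans (mul_le_mul_of_nonneg_right hXle hXpow) hsum
    have hfact : ((Nat.factorial (t+1) : ℝ)) = ((t : ℝ) + 1) * (Nat.factorial t : ℝ) := by
      rw [Nat.factorial_succ]; push_cast; ring
    have ht1 : (0 : ℝ) < (t : ℝ) + 1 := by positivity
    have heq : (1 / (Nat.factorial (t+1)) : ℝ) * X ^ (t+1)
        = (X * ((1 / (Nat.factorial t) : ℝ) * X ^ t)) / ((t : ℝ) + 1) := by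
      rw [hfact]; field_simp; ring
    rw [heq, div_le_iff₀ ht1]
    exact h3.trans_eq (by ring)

/-- Elementary symmetric sum lower bound: for nonnegative `a₁,…,a_N` with maximum `a*`,
`1 ≤ t ≤ N` and `∑ aᵢ ≥ t·a*`, we have
`∑_{|S|=t} ∏_{i∈S} aᵢ ≥ (1/t!)·(∑ aᵢ - t·a*)^t`. -/
theorem elementary_symmetric_lower_bound
    (N t : ℕ) (hN : 1 ≤ N) (ht : 1 ≤ t) (htN : t ≤ N)
    (a : ℕ → ℝ) (ha : ∀ i ∈ Finset.range N, 0 ≤ a i)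
    (hsum : (t : ℝ) * (Finset.range N).sup' (Finset.nonempty_range_iff.mpr (by omega)) a
      ≤ ∑ i ∈ Finset.range N, a i) :
    (1 / (Nat.factorial t) : ℝ) *
        (∑ i ∈ Finset.range N, a i -
          (t : ℝ) * (Finset.range N).sup' (Finset.nonempty_range_iff.mpr (by omega)) a) ^ t
      ≤ ∑ S ∈ Finset.powersetCard t (Finset.range N), ∏ i ∈ S, a i := by
  set M := (Finset.range N).sup' (Finset.nonempty_range_iff.mpr (by omega)) a with hMdef
  have h0 : (0 : ℕ) ∈ Finset.range N := Finset.mem_range.2 (by omega)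
  have hM0 : 0 ≤ M := le_trans (ha 0 h0) (Finset.le_sup' a h0)
  have hle : ∀ i ∈ Finset.range N, a i ≤ M := fun i hi => Finset.le_sup' a hi
  have := esymm_aux a M hM0 t (Finset.range N) ha hle (by simpa using htN)
    (by push_cast; linarith)
  push_cast at this
  linarith
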